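/- Let Ω ⊆ ℝ^d be open and bounded, let X = {0,1} be the two-point metric space with d(0,1) = 1, let U ⊆ Ω be measurable, and set f(x) := δ₀ for x ∈ U and f(x) := δ₁ for x ∈ Ω ∖ U. Then the map u ↦ ũ, where ũ(x) := u(x)({0}), is a one-to-one correspondence between weakly measurable functions u : Ω → P(X) and measurable functions ũ : Ω → [0,1] (with inverse ũ ↦ u(x) = ũ(x) δ₀ + (1 − ũ(x)) δ₁), and under this correspondence, for every λ ≥ 0, ∫_Ω W₁(f(x), u(x)) dx + λ TV_KR(u) = ‖1_U − ũ‖_{L¹(Ω)} + λ TV(ũ); in particular W₁(f(x),u(x)) = |1_U(x) − ũ(x)| pointwise and TV_KR(u) = TV(ũ). -/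

import Mathlib

open scoped Classical
open MeasureTheory ENNReal

attribute [local instance] MeasureTheory.Measure.Subtype.measureSpace

/-- The two-point metric space `X = {0,1}` with `d(0,1) = 1` (as a subspace of `ℝ`). -/
abbrev TwoPt : Type := ({0, 1} : Set ℝ)

/-- The point `0 ∈ X`. -/
def z0 : TwoPt := ⟨0, by simp⟩

/-- The point `1 ∈ X`. -/
def z1 : TwoPt := ⟨1, by simp⟩

/-- The Dirac measure `δ_z` as a Borel probability measure on `X`. -/
noncomputable def diracP (z : TwoPt) : ProbabilityMeasure TwoPt :=
  ⟨MeasureTheory.Measure.dirac z, inferInstance⟩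

/-- A function `u : Ω → P(X)` is weakly measurable if `x ↦ ∫_X g d(u x)` is measurable for
every (automatically continuous) `g : X → ℝ`. -/
def WeaklyMeasurable {d : ℕ} {Ω : Set (EuclideanSpace ℝ (Fin d))}
    (u : Ω → ProbabilityMeasure TwoPt) : Prop :=
  ∀ g : TwoPt → ℝ, Measurable fun x : Ω => ∫ z, g z ∂(u x : Measure TwoPt)

/-- `W₁(μ,ν) = sup { ∫ g dμ − ∫ g dν : g 1-Lipschitz }`. -/
noncomputable def W1 {X : Type*} [MeasurableSpace X] [MetricSpace X]
    (μ ν : ProbabilityMeasure X) : ℝ :=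
  sSup { r : ℝ | ∃ f : X → ℝ, LipschitzWith 1 f ∧
    r = ∫ z, f z ∂(μ : Measure X) - ∫ z, f z ∂(ν : Measure X) }

/-- The divergence in the `Ω`-variable of `p : ℝ^d × X → ℝ^d`. -/
noncomputable def divX {d : ℕ} {X : Type*}
    (p : EuclideanSpace ℝ (Fin d) → X → EuclideanSpace ℝ (Fin d))
    (x : EuclideanSpace ℝ (Fin d)) (z : X) : ℝ :=
  ∑ i, fderiv ℝ (fun y => p y z i) x (EuclideanSpace.single i 1)

/-- The total variation `TV_KR` of a measure-valued function `u : Ω → P(X)`. -/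
noncomputable def TVKR {d : ℕ} {X : Type*} [MeasurableSpace X] [MetricSpace X]
    (Ω : Set (EuclideanSpace ℝ (Fin d))) (u : Ω → ProbabilityMeasure X) : ℝ :=
  sSup { r : ℝ | ∃ p : EuclideanSpace ℝ (Fin d) → X → EuclideanSpace ℝ (Fin d),
    Continuous (Function.uncurry p) ∧
    HasCompactSupport p ∧ tsupport p ⊆ Ω ∧
    (∀ z : X, ContDiff ℝ 1 (fun x => p x z)) ∧
    (∀ x : EuclideanSpace ℝ (Fin d), LipschitzWith 1 (p x)) ∧
    r = ∫ x : Ω, ∫ z, -divX p (x : EuclideanSpace ℝ (Fin d)) z ∂(u x : Measure X) }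

/-- The classical total variation of a scalar function `ũ : Ω → ℝ`,
`TV(ũ) = sup { ∫_Ω ũ div φ dx : φ ∈ C¹_c(Ω,ℝ^d), ‖φ(x)‖₂ ≤ 1 }`. -/
noncomputable def TVc {d : ℕ} (Ω : Set (EuclideanSpace ℝ (Fin d))) (v : Ω → ℝ) : ℝ :=
  sSup { r : ℝ | ∃ φ : EuclideanSpace ℝ (Fin d) → EuclideanSpace ℝ (Fin d),
    ContDiff ℝ 1 φ ∧ HasCompactSupport φ ∧ tsupport φ ⊆ Ω ∧
    (∀ x : EuclideanSpace ℝ (Fin d), ‖φ x‖ ≤ 1) ∧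
    r = ∫ x : Ω, v x *
      (∑ i, fderiv ℝ (fun y => φ y i) (x : EuclideanSpace ℝ (Fin d))
        (EuclideanSpace.single i 1)) }


section Aux

lemma twoPt_cases (z : TwoPt) : z = z0 ∨ z = z1 := by
  rcases z with ⟨v, hv⟩
  rcases hv with h | h
  · exact Or.inl (Subtype.ext h)
  · exact Or.inr (Subtype.ext h)

lemma z0_ne_z1 : z0 ≠ z1 := by
  intro h
  have := congrArg Subtype.val h
  norm_num [z0, z1] at this

lemma dist_z0_z1 : dist z0 z1 = 1 := by
  rw [Subtype.dist_eq]
  simp [z0, z1]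

lemma univ_twoPt : (Set.univ : Set TwoPt) = {z0, z1} := by
  ext z
  simp [twoPt_cases z]

lemma meas_sum (μ : Measure TwoPt) [IsProbabilityMeasure μ] :
    μ {z0} + μ {z1} = 1 := by
  have hd : Disjoint ({z0} : Set TwoPt) {z1} := by
    simp [Set.disjoint_singleton, z0_ne_z1]
  rw [← measure_union hd (measurableSet_singleton _)]
  rw [show ({z0} ∪ {z1} : Set TwoPt) = Set.univ by rw [univ_twoPt]; rfl]
  exact measure_univ

lemma meas_decomp (μ : Measure TwoPt) [IsProbabilityMeasure μ] :
    μ = μ {z0} • Measure.dirac z0 + μ {z1} • Measure.dirac z1 := by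
  ext s hs
  have hsplit : s = ({z0} ∩ s) ∪ ({z1} ∩ s) := by
    ext z
    rcases twoPt_cases z with h | h <;> subst h <;> simp [z0_ne_z1, z0_ne_z1.symm]
  have hd : Disjoint (({z0} : Set TwoPt) ∩ s) (({z1} : Set TwoPt) ∩ s) := by
    refine Set.disjoint_of_subset Set.inter_subset_left Set.inter_subset_left ?_
    simp [Set.disjoint_singleton, z0_ne_z1]
  rw [Measure.add_apply, Measure.smul_apply, Measure.smul_apply,
    Measure.dirac_apply' _ hs, Measure.dirac_apply' _ hs]
  conv_lhs => rw [hsplit]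
  rw [measure_union hd ((measurableSet_singleton _).inter hs)]
  have e0 : ({z0} : Set TwoPt) ∩ s = (if z0 ∈ s then {z0} else ∅) := by
    split_ifs with h
    · rw [Set.inter_eq_left]; simpa using h
    · exact Set.singleton_inter_eq_empty.2 h
  have e1 : ({z1} : Set TwoPt) ∩ s = (if z1 ∈ s then {z1} else ∅) := by
    split_ifs with h
    · rw [Set.inter_eq_left]; simpa using h
    · exact Set.singleton_inter_eq_empty.2 h
  rw [e0, e1]
  by_cases h0 : z0 ∈ s <;> by_cases h1 : z1 ∈ s <;>
    simp [h0, h1, Set.indicator]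

lemma twoPt_integrable (μ : Measure TwoPt) [IsFiniteMeasure μ] (g : TwoPt → ℝ) :
    Integrable g μ := by
  have : Finite TwoPt := Set.Finite.to_subtype (by simp : ({0,1} : Set ℝ).Finite)
  exact .of_finite

lemma twoPt_integral (μ : Measure TwoPt) [IsProbabilityMeasure μ] (g : TwoPt → ℝ) :
    ∫ z, g z ∂μ = (μ {z0}).toReal * g z0 + (μ {z1}).toReal * g z1 := by
  conv_lhs => rw [meas_decomp μ]
  rw [integral_add_measure ((twoPt_integrable _ g).smul_measure (measure_ne_top μ _))
    ((twoPt_integrable _ g).smul_measure (measure_ne_top μ _)),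
    integral_smul_measure, integral_smul_measure, integral_dirac, integral_dirac]
  simp [smul_eq_mul]

lemma twoPt_toReal_z1 (μ : Measure TwoPt) [IsProbabilityMeasure μ] :
    (μ {z1}).toReal = 1 - (μ {z0}).toReal := by
  have h := meas_sum μ
  have := ENNReal.toReal_add (measure_ne_top μ {z0}) (measure_ne_top μ {z1})
  rw [h] at this
  simp only [ENNReal.toReal_one] at this
  linarith

/-! ### Divergence lemmas -/

lemma integral_fderiv_apply_eq_zero {E : Type*} [NormedAddCommGroup E]
    [InnerProductSpace ℝ E] [FiniteDimensional ℝ E] [MeasurableSpace E] [BorelSpace E]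
    (μ : Measure E) [μ.IsAddHaarMeasure]
    {g : E → ℝ} (hg : ContDiff ℝ 1 g) (hgs : HasCompactSupport g) (v : E) :
    ∫ x, fderiv ℝ g x v ∂μ = 0 := by
  obtain ⟨R, hR⟩ := hgs.isBounded.subset_closedBall 0
  set R' : ℝ := max R 0 with hR'
  have hRR' : tsupport g ⊆ Metric.closedBall 0 R' :=
    hR.trans (Metric.closedBall_subset_closedBall (le_max_left R 0))
  set χ : ContDiffBump (0 : E) := ⟨R' + 1, R' + 2, by positivity, by linarith⟩ with hχ
  have hχ1 : ∀ x ∈ tsupport g, (χ : E → ℝ) x = 1 := fun x hx =>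
    χ.one_of_mem_closedBall (by
      have := hRR' hx
      simp only [Metric.mem_closedBall, dist_zero_right] at this ⊢
      show ‖x‖ ≤ R' + 1
      linarith)
  have hχd : ∀ x ∈ tsupport g, fderiv ℝ (χ : E → ℝ) x = 0 := by
    intro x hx
    have hball : Metric.ball (0 : E) (R' + 1) ∈ nhds x := by
      refine Metric.isOpen_ball.mem_nhds ?_
      have := hRR' hx
      simp only [Metric.mem_closedBall, dist_zero_right] at this
      simp only [Metric.mem_ball, dist_zero_right]
      linarith
    have heq : (χ : E → ℝ) =ᶠ[nhds x] fun _ => 1 := by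
      filter_upwards [hball] with y hy
      refine χ.one_of_mem_closedBall ?_
      simp only [Metric.mem_ball, dist_zero_right] at hy
      show y ∈ Metric.closedBall (0:E) (R' + 1)
      simp only [Metric.mem_closedBall, dist_zero_right]
      linarith
    rw [heq.fderiv_eq, fderiv_fun_const]
    rfl
  have hχc : ContDiff ℝ 1 (χ : E → ℝ) := χ.contDiff (n := 1)
  have hgd : Differentiable ℝ g := hg.differentiable one_ne_zero
  have hg' : Continuous fun x => fderiv ℝ g x v :=
    (ContinuousLinearMap.apply ℝ ℝ v).continuous.comp (hg.continuous_fderiv one_ne_zero)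
  have hsup' : Function.support (fun x => fderiv ℝ g x v) ⊆ tsupport g := by
    intro x hx
    by_contra h
    have : fderiv ℝ g x = 0 := by
      have := support_fderiv_subset ℝ (f := g)
      by_contra h2
      exact h (this h2)
    simp [Function.mem_support, this] at hx
  have key := integral_mul_fderiv_eq_neg_fderiv_mul_of_integrable (μ := μ)
    (f := (χ : E → ℝ)) (g := g) (v := v)
    ?_ ?_ ?_ (fun x _ => (hχc.differentiable one_ne_zero) x) (fun x _ => hgd x)
  · have h1 : ∀ x, (χ : E → ℝ) x * fderiv ℝ g x v = fderiv ℝ g x v := by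
      intro x
      by_cases hx : x ∈ tsupport g
      · rw [hχ1 x hx, one_mul]
      · have : fderiv ℝ g x v = 0 := by
          by_contra h
          exact hx (hsup' (Function.mem_support.2 h))
        rw [this, mul_zero]
    have h2 : ∀ x, fderiv ℝ (χ : E → ℝ) x v * g x = 0 := by
      intro x
      by_cases hx : x ∈ tsupport g
      · rw [hχd x hx]; simp
      · rw [image_eq_zero_of_notMem_tsupport hx, mul_zero]
    simp only [h1, h2] at key
    simpa using key
  · refine (integrable_zero _ _ _).congr (Filter.Eventually.of_forall fun x => ?_)
    show (0:ℝ) = _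
    symm
    show (fderiv ℝ (χ : E → ℝ) x) v * g x = 0
    by_cases hx : x ∈ tsupport g
    · rw [hχd x hx]; simp
    · rw [image_eq_zero_of_notMem_tsupport hx, mul_zero]
  · refine Continuous.integrable_of_hasCompactSupport ((hχc.continuous).mul hg') ?_
    exact χ.hasCompactSupport.mul_right
  · refine Continuous.integrable_of_hasCompactSupport ((hχc.continuous).mul hg.continuous) ?_
    exact χ.hasCompactSupport.mul_right

/-- The scalar divergence of a vector field on Euclidean space. -/
noncomputable def divE {d : ℕ} (q : EuclideanSpace ℝ (Fin d) → EuclideanSpace ℝ (Fin d))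
    (y : EuclideanSpace ℝ (Fin d)) : ℝ :=
  ∑ i, fderiv ℝ (fun w => q w i) y (EuclideanSpace.single i 1)

lemma divE_comp_contDiff {d : ℕ} {q : EuclideanSpace ℝ (Fin d) → EuclideanSpace ℝ (Fin d)}
    (h1 : ContDiff ℝ 1 q) (i : Fin d) : ContDiff ℝ 1 (fun w => q w i) :=
  (EuclideanSpace.proj (𝕜 := ℝ) i).contDiff.comp h1

lemma divE_cont {d : ℕ} {q : EuclideanSpace ℝ (Fin d) → EuclideanSpace ℝ (Fin d)}
    (h1 : ContDiff ℝ 1 q) : Continuous (divE q) := by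
  apply continuous_finset_sum
  intro i _
  exact (ContinuousLinearMap.apply ℝ ℝ (EuclideanSpace.single i 1)).continuous.comp
    ((divE_comp_contDiff h1 i).continuous_fderiv one_ne_zero)

lemma divE_supp {d : ℕ} (q : EuclideanSpace ℝ (Fin d) → EuclideanSpace ℝ (Fin d)) :
    Function.support (divE q) ⊆ tsupport q := by
  intro y hy
  by_contra h
  apply Function.mem_support.1 hy
  refine Finset.sum_eq_zero fun i _ => ?_
  have hsub : tsupport (fun w => q w i) ⊆ tsupport q := by
    refine closure_mono fun w hw => ?_
    simp only [Function.mem_support] at hw ⊢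
    intro h0
    exact hw (by rw [h0]; rfl)
  have : fderiv ℝ (fun w => q w i) y = 0 := by
    by_contra h2
    exact h (hsub (support_fderiv_subset ℝ (Function.mem_support.2 h2)))
  rw [this]
  rfl

lemma divE_hcs {d : ℕ} {q : EuclideanSpace ℝ (Fin d) → EuclideanSpace ℝ (Fin d)}
    (h2 : HasCompactSupport q) : HasCompactSupport (divE q) :=
  h2.of_isClosed_subset isClosed_closure
    (closure_minimal (divE_supp q) (isClosed_tsupport q))

lemma divE_integral_zero {d : ℕ} {q : EuclideanSpace ℝ (Fin d) → EuclideanSpace ℝ (Fin d)}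
    (h1 : ContDiff ℝ 1 q) (h2 : HasCompactSupport q) :
    ∫ x, divE q x = 0 := by
  unfold divE
  rw [integral_finset_sum]
  · refine Finset.sum_eq_zero fun i _ => ?_
    refine integral_fderiv_apply_eq_zero volume (divE_comp_contDiff h1 i) ?_ _
    exact h2.mono fun y hy => by
      simp only [Function.mem_support] at hy ⊢
      intro h0
      exact hy (by rw [h0]; rfl)
  · intro i _
    refine Continuous.integrable_of_hasCompactSupport
      ((ContinuousLinearMap.apply ℝ ℝ (EuclideanSpace.single i 1)).continuous.comp
        ((divE_comp_contDiff h1 i).continuous_fderiv one_ne_zero)) ?_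
    have hq_i : HasCompactSupport (fun w => q w i) := h2.mono fun y hy => by
      simp only [Function.mem_support] at hy ⊢
      intro h0
      exact hy (by rw [h0]; rfl)
    exact (hq_i.fderiv ℝ).comp_left (g := fun L : _ →L[ℝ] ℝ => L (EuclideanSpace.single i 1)) rfl

lemma divE_sub {d : ℕ} {q₁ q₂ : EuclideanSpace ℝ (Fin d) → EuclideanSpace ℝ (Fin d)}
    (h1 : ContDiff ℝ 1 q₁) (h2 : ContDiff ℝ 1 q₂) (y : EuclideanSpace ℝ (Fin d)) :
    divE (fun w => q₁ w - q₂ w) y = divE q₁ y - divE q₂ y := by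
  unfold divE
  rw [← Finset.sum_sub_distrib]
  refine Finset.sum_congr rfl fun i _ => ?_
  have e : (fun w => (q₁ w - q₂ w) i) = fun w => q₁ w i - q₂ w i := by
    funext w; rfl
  rw [e, fderiv_fun_sub (((divE_comp_contDiff h1 i).differentiable one_ne_zero) y)
    (((divE_comp_contDiff h2 i).differentiable one_ne_zero) y)]
  rfl

lemma divE_const_smul {d : ℕ} {φ : EuclideanSpace ℝ (Fin d) → EuclideanSpace ℝ (Fin d)}
    (hφ : ContDiff ℝ 1 φ) (c : ℝ) (y : EuclideanSpace ℝ (Fin d)) :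
    divE (fun w => c • φ w) y = c * divE φ y := by
  unfold divE
  rw [Finset.mul_sum]
  refine Finset.sum_congr rfl fun i _ => ?_
  have e : (fun w => (c • φ w) i) = fun w => c • (φ w i) := by
    funext w; rfl
  rw [e, fderiv_fun_const_smul (((divE_comp_contDiff hφ i).differentiable one_ne_zero) y) c]
  rfl

end Aux


lemma divX_eq {d : ℕ} (p : EuclideanSpace ℝ (Fin d) → TwoPt → EuclideanSpace ℝ (Fin d))
    (y : EuclideanSpace ℝ (Fin d)) (z : TwoPt) : divX p y z = divE (fun w => p w z) y := rfl


/-- For `X = {0,1}` with `d(0,1)=1`, `U ⊆ Ω` measurable, and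
`f = δ₀` on `U`, `f = δ₁` on `Ω ∖ U`: the map `u ↦ ũ`, `ũ(x) := u(x)({0})`, is a one-to-one
correspondence between weakly measurable `u : Ω → P(X)` and measurable `ũ : Ω → [0,1]`
(with inverse `ũ ↦ ũ δ₀ + (1−ũ) δ₁`), and under this correspondence
`∫_Ω W₁(f x, u x) dx + λ TV_KR(u) = ‖1_U − ũ‖_{L¹} + λ TV(ũ)`; in particular
`W₁(f x, u x) = |1_U(x) − ũ(x)|` pointwise and `TV_KR(u) = TV(ũ)`. -/
theorem stmt6 {d : ℕ} (Ω : Set (EuclideanSpace ℝ (Fin d)))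
    (hΩo : IsOpen Ω) (hΩb : Bornology.IsBounded Ω)
    (U : Set (EuclideanSpace ℝ (Fin d))) (hUΩ : U ⊆ Ω) (hUm : MeasurableSet U)
    (f : Ω → ProbabilityMeasure TwoPt)
    (hf : ∀ x : Ω, f x = if (x : EuclideanSpace ℝ (Fin d)) ∈ U then diracP z0 else diracP z1)
    (u : Ω → ProbabilityMeasure TwoPt) (hu : WeaklyMeasurable u)
    (ut : Ω → ℝ) (hut : ∀ x : Ω, ut x = ((u x : Measure TwoPt) {z0}).toReal) :
    -- `ũ` is measurable with values in `[0,1]`: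
    (Measurable ut ∧ ∀ x : Ω, ut x ∈ Set.Icc (0 : ℝ) 1) ∧
    -- the correspondence is recovered by `u = ũ δ₀ + (1 − ũ) δ₁` (injectivity):
    (∀ x : Ω, (u x : Measure TwoPt) =
      ENNReal.ofReal (ut x) • MeasureTheory.Measure.dirac z0 +
        ENNReal.ofReal (1 - ut x) • MeasureTheory.Measure.dirac z1) ∧
    -- every measurable `v : Ω → [0,1]` arises this way (surjectivity):
    (∀ v : Ω → ℝ, Measurable v → (∀ x, v x ∈ Set.Icc (0 : ℝ) 1) →
      ∃ u' : Ω → ProbabilityMeasure TwoPt, WeaklyMeasurable u' ∧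
        ∀ x : Ω, ((u' x : Measure TwoPt) {z0}).toReal = v x) ∧
    -- pointwise identification of the data term:
    (∀ x : Ω, W1 (f x) (u x) =
      |(if (x : EuclideanSpace ℝ (Fin d)) ∈ U then (1 : ℝ) else 0) - ut x|) ∧
    -- identification of the regularizers:
    TVKR Ω u = TVc Ω ut ∧
    -- the full energies agree:
    (∀ lam : ℝ, 0 ≤ lam →
      (∫ x : Ω, W1 (f x) (u x)) + lam * TVKR Ω u =
        (∫ x : Ω, |(if (x : EuclideanSpace ℝ (Fin d)) ∈ U then (1 : ℝ) else 0) - ut x|) +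
          lam * TVc Ω ut) := by
  have hΩm : MeasurableSet Ω := hΩo.measurableSet
  haveI hfinmeas : IsFiniteMeasure (volume : Measure Ω) := by
    constructor
    show ((volume : Measure (EuclideanSpace ℝ (Fin d))).comap Subtype.val) Set.univ < ⊤
    rw [(MeasurableEmbedding.subtype_coe hΩm).comap_apply, Subtype.coe_image_univ]
    exact hΩb.measure_lt_top
  have hbd : ∀ x : Ω, ut x ∈ Set.Icc (0:ℝ) 1 := by
    intro x
    constructor
    · rw [hut]; exact ENNReal.toReal_nonneg
    · rw [hut]
      have h := MeasureTheory.prob_le_one (μ := (u x : Measure TwoPt)) (s := {z0})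
      calc ((u x : Measure TwoPt) {z0}).toReal ≤ (1 : ℝ≥0∞).toReal :=
            ENNReal.toReal_mono one_ne_top h
        _ = 1 := by simp
  have hz1 : ∀ x : Ω, ((u x : Measure TwoPt) {z1}).toReal = 1 - ut x := by
    intro x; rw [twoPt_toReal_z1, hut]
  have hInt : ∀ (x : Ω) (g : TwoPt → ℝ),
      ∫ z, g z ∂(u x : Measure TwoPt) = ut x * g z0 + (1 - ut x) * g z1 := by
    intro x g
    rw [twoPt_integral, ← hut x, hz1 x]
  have hmeas : Measurable ut := by
    have e : ut = fun x => ∫ z, (if z = z0 then (1:ℝ) else 0) ∂(u x : Measure TwoPt) := by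
      funext x
      rw [hInt x]
      simp [Ne.symm z0_ne_z1]
    rw [e]; exact hu _
  have hdec : ∀ x : Ω, (u x : Measure TwoPt) =
      ENNReal.ofReal (ut x) • Measure.dirac z0 + ENNReal.ofReal (1 - ut x) • Measure.dirac z1 := by
    intro x
    have h0 : ENNReal.ofReal (ut x) = (u x : Measure TwoPt) {z0} := by
      rw [hut, ENNReal.ofReal_toReal (measure_ne_top _ _)]
    have h1 : ENNReal.ofReal (1 - ut x) = (u x : Measure TwoPt) {z1} := by
      rw [← hz1 x, ENNReal.ofReal_toReal (measure_ne_top _ _)]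
    rw [h0, h1]
    exact meas_decomp _
  -- surjectivity
  have hsurj : ∀ v : Ω → ℝ, Measurable v → (∀ x, v x ∈ Set.Icc (0:ℝ) 1) →
      ∃ u' : Ω → ProbabilityMeasure TwoPt, WeaklyMeasurable u' ∧
        ∀ x : Ω, ((u' x : Measure TwoPt) {z0}).toReal = v x := by
    intro v hv hv01
    have hm0 : ∀ x : Ω, (ENNReal.ofReal (v x) • Measure.dirac z0
        + ENNReal.ofReal (1 - v x) • Measure.dirac z1 : Measure TwoPt) {z0}
        = ENNReal.ofReal (v x) := by
      intro x
      rw [Measure.add_apply, Measure.smul_apply, Measure.smul_apply,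
        Measure.dirac_apply' _ (measurableSet_singleton _),
        Measure.dirac_apply' _ (measurableSet_singleton _)]
      simp [Set.indicator, Ne.symm z0_ne_z1]
    have hm1 : ∀ x : Ω, (ENNReal.ofReal (v x) • Measure.dirac z0
        + ENNReal.ofReal (1 - v x) • Measure.dirac z1 : Measure TwoPt) {z1}
        = ENNReal.ofReal (1 - v x) := by
      intro x
      rw [Measure.add_apply, Measure.smul_apply, Measure.smul_apply,
        Measure.dirac_apply' _ (measurableSet_singleton _),
        Measure.dirac_apply' _ (measurableSet_singleton _)]
      simp [Set.indicator, z0_ne_z1]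
    have hprob : ∀ x : Ω, IsProbabilityMeasure (ENNReal.ofReal (v x) • Measure.dirac z0
        + ENNReal.ofReal (1 - v x) • Measure.dirac z1 : Measure TwoPt) := by
      intro x
      constructor
      rw [Measure.add_apply, Measure.smul_apply, Measure.smul_apply]
      simp only [measure_univ, smul_eq_mul, mul_one]
      rw [← ENNReal.ofReal_add (hv01 x).1 (by linarith [(hv01 x).2])]
      norm_num
    refine ⟨fun x => ⟨_, hprob x⟩, ?_, fun x => ?_⟩
    · intro g
      show Measurable fun x : Ω => ∫ z, g z ∂(ENNReal.ofReal (v x) • Measure.dirac z0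
        + ENNReal.ofReal (1 - v x) • Measure.dirac z1 : Measure TwoPt)
      have key : ∀ x : Ω, (∫ z, g z ∂(ENNReal.ofReal (v x) • Measure.dirac z0
          + ENNReal.ofReal (1 - v x) • Measure.dirac z1 : Measure TwoPt))
          = v x * g z0 + (1 - v x) * g z1 := by
        intro x
        haveI := hprob x
        rw [twoPt_integral, hm0 x, hm1 x, ENNReal.toReal_ofReal (hv01 x).1,
          ENNReal.toReal_ofReal (by linarith [(hv01 x).2])]
      simp only [key]
      exact (hv.mul measurable_const).add ((measurable_const.sub hv).mul measurable_const)
    · show ((ENNReal.ofReal (v x) • Measure.dirac z0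
        + ENNReal.ofReal (1 - v x) • Measure.dirac z1 : Measure TwoPt) {z0}).toReal = v x
      rw [hm0 x, ENNReal.toReal_ofReal (hv01 x).1]
  -- pointwise W1
  have hW : ∀ x : Ω, W1 (f x) (u x) =
      |(if (x : EuclideanSpace ℝ (Fin d)) ∈ U then (1:ℝ) else 0) - ut x| := by
    intro x
    have ha0 := (hbd x).1
    have ha1 := (hbd x).2
    by_cases hx : (x : EuclideanSpace ℝ (Fin d)) ∈ U
    · have hfx : (f x : Measure TwoPt) = Measure.dirac z0 := by rw [hf x, if_pos hx]; rfl
      rw [if_pos hx, show |(1:ℝ) - ut x| = 1 - ut x from abs_of_nonneg (by linarith)]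
      have hub : ∀ r ∈ {r : ℝ | ∃ g : TwoPt → ℝ, LipschitzWith 1 g ∧
          r = (∫ z, g z ∂(f x : Measure TwoPt)) - ∫ z, g z ∂(u x : Measure TwoPt)},
          r ≤ 1 - ut x := by
        rintro r ⟨g, hg, rfl⟩
        rw [hfx, integral_dirac, hInt x g]
        have hd := hg.dist_le_mul z0 z1
        rw [dist_z0_z1, NNReal.coe_one, mul_one, Real.dist_eq] at hd
        have h1 : g z0 - g z1 ≤ 1 := (le_abs_self _).trans hd
        nlinarith [mul_le_mul_of_nonneg_left h1 (by linarith : (0:ℝ) ≤ 1 - ut x)]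
      have hmem : (1 - ut x) ∈ {r : ℝ | ∃ g : TwoPt → ℝ, LipschitzWith 1 g ∧
          r = (∫ z, g z ∂(f x : Measure TwoPt)) - ∫ z, g z ∂(u x : Measure TwoPt)} := by
        refine ⟨fun z => -(z : ℝ), ?_, ?_⟩
        · apply LipschitzWith.of_dist_le_mul
          intro a b
          rw [NNReal.coe_one, one_mul, Subtype.dist_eq, Real.dist_eq, Real.dist_eq]
          rw [show -(a:ℝ) - -(b:ℝ) = -((a:ℝ) - (b:ℝ)) by ring, abs_neg]
        · show (1:ℝ) - ut x = (∫ z, -(z : ℝ) ∂(f x : Measure TwoPt))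
              - ∫ z, -(z : ℝ) ∂(u x : Measure TwoPt)
          rw [hfx, integral_dirac, hInt x]
          norm_num [z0, z1]
      exact le_antisymm (Real.sSup_le hub (by linarith)) (le_csSup ⟨1 - ut x, hub⟩ hmem)
    · have hfx : (f x : Measure TwoPt) = Measure.dirac z1 := by rw [hf x, if_neg hx]; rfl
      rw [if_neg hx, show |(0:ℝ) - ut x| = ut x by rw [zero_sub, abs_neg, abs_of_nonneg ha0]]
      have hub : ∀ r ∈ {r : ℝ | ∃ g : TwoPt → ℝ, LipschitzWith 1 g ∧
          r = (∫ z, g z ∂(f x : Measure TwoPt)) - ∫ z, g z ∂(u x : Measure TwoPt)},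
          r ≤ ut x := by
        rintro r ⟨g, hg, rfl⟩
        rw [hfx, integral_dirac, hInt x g]
        have hd := hg.dist_le_mul z0 z1
        rw [dist_z0_z1, NNReal.coe_one, mul_one, Real.dist_eq] at hd
        have h1 : g z1 - g z0 ≤ 1 := by
          rw [abs_sub_comm] at hd
          exact (le_abs_self _).trans hd
        nlinarith [mul_le_mul_of_nonneg_left h1 ha0]
      have hmem : ut x ∈ {r : ℝ | ∃ g : TwoPt → ℝ, LipschitzWith 1 g ∧
          r = (∫ z, g z ∂(f x : Measure TwoPt)) - ∫ z, g z ∂(u x : Measure TwoPt)} := by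
        refine ⟨fun z => (z : ℝ), ?_, ?_⟩
        · apply LipschitzWith.of_dist_le_mul
          intro a b
          rw [NNReal.coe_one, one_mul, Subtype.dist_eq]
        · show ut x = (∫ z, (z : ℝ) ∂(f x : Measure TwoPt))
              - ∫ z, (z : ℝ) ∂(u x : Measure TwoPt)
          rw [hfx, integral_dirac, hInt x]
          norm_num [z0, z1]
      exact le_antisymm (Real.sSup_le hub ha0) (le_csSup ⟨ut x, hub⟩ hmem)
  -- integrability helpers
  have hIntc : ∀ h : EuclideanSpace ℝ (Fin d) → ℝ, Continuous h →
      (∃ C, ∀ y, ‖h y‖ ≤ C) → Integrable (fun x : Ω => h ↑x) volume := by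
    rintro h hh ⟨C, hC⟩
    refine Integrable.mono' (integrable_const C) ?_ (Filter.Eventually.of_forall fun x => hC _)
    exact ((hh.comp continuous_subtype_val).measurable).aestronglyMeasurable
  have hIntmul : ∀ h : EuclideanSpace ℝ (Fin d) → ℝ, Continuous h →
      (∃ C, ∀ y, ‖h y‖ ≤ C) → Integrable (fun x : Ω => ut x * h ↑x) volume := by
    rintro h hh ⟨C, hC⟩
    have hC0 : 0 ≤ C := le_trans (norm_nonneg _) (hC 0)
    refine Integrable.mono' (integrable_const C) ?_ ?_
    · exact (hmeas.mul ((hh.comp continuous_subtype_val).measurable)).aestronglyMeasurable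
    · refine Filter.Eventually.of_forall fun x => ?_
      have h1 : |ut x| ≤ 1 := abs_le.2 ⟨by linarith [(hbd x).1], (hbd x).2⟩
      calc ‖ut x * h ↑x‖ = |ut x| * ‖h ↑x‖ := by rw [norm_mul]; rfl
        _ ≤ 1 * C := mul_le_mul h1 (hC _) (norm_nonneg _) zero_le_one
        _ = C := one_mul C
  have hdivΩ : ∀ q : EuclideanSpace ℝ (Fin d) → EuclideanSpace ℝ (Fin d),
      ContDiff ℝ 1 q → HasCompactSupport q → tsupport q ⊆ Ω →
      ∫ x : Ω, divE q ↑x = 0 := by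
    intro q h1 h2 h3
    rw [MeasureTheory.integral_subtype hΩm (divE q),
      MeasureTheory.setIntegral_eq_integral_of_forall_compl_eq_zero
        (fun y hy => by
          by_contra h
          exact hy (h3 (divE_supp q (Function.mem_support.2 h)))),
      divE_integral_zero h1 h2]
  -- TVKR = TVc
  have hTV : TVKR Ω u = TVc Ω ut := by
    unfold TVKR TVc
    congr 1
    ext r
    simp only [Set.mem_setOf_eq]
    constructor
    · rintro ⟨p, hc, hcs, hsupp, hcd, hlip, rfl⟩
      have hpz_supp : ∀ z : TwoPt,
          Function.support (fun y => p y z) ⊆ Function.support p := by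
        intro z y hy
        simp only [Function.mem_support] at hy ⊢
        intro h0
        exact hy (by rw [h0]; rfl)
      have hpz : ∀ z : TwoPt, HasCompactSupport (fun y => p y z) :=
        fun z => hcs.mono (hpz_supp z)
      have hpzt : ∀ z : TwoPt, tsupport (fun y => p y z) ⊆ tsupport p := fun z =>
        closure_minimal ((hpz_supp z).trans subset_closure) (isClosed_tsupport p)
      have hDbound : ∀ z : TwoPt, ∃ C, ∀ y, ‖divE (fun w => p w z) y‖ ≤ C := fun z =>
        (divE_hcs (hpz z)).exists_bound_of_continuous (divE_cont (hcd z))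
      have hφc : ContDiff ℝ 1 (fun y => p y z1 - p y z0) := (hcd z1).sub (hcd z0)
      have hφsupp : Function.support (fun y => p y z1 - p y z0) ⊆ Function.support p := by
        intro y hy
        simp only [Function.mem_support] at hy ⊢
        intro h0
        apply hy
        rw [h0]
        simp
      have hφcs : HasCompactSupport (fun y => p y z1 - p y z0) := hcs.mono hφsupp
      refine ⟨fun y => p y z1 - p y z0, hφc, hφcs, ?_, ?_, ?_⟩
      · exact (closure_minimal (hφsupp.trans subset_closure)
          (isClosed_tsupport p)).trans hsupp
      · intro y
        calc ‖p y z1 - p y z0‖ = dist (p y z1) (p y z0) := (dist_eq_norm _ _).symm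
          _ ≤ 1 * dist z1 z0 := by
              have := (hlip y).dist_le_mul z1 z0
              rwa [NNReal.coe_one] at this
          _ = 1 := by rw [dist_comm, dist_z0_z1, mul_one]
      · show (∫ x : Ω, ∫ z, -divX p ↑x z ∂(u x : Measure TwoPt))
            = ∫ x : Ω, ut x * divE (fun y => p y z1 - p y z0) ↑x
        have hstep1 : (fun x : Ω => ∫ z, -divX p ↑x z ∂(u x : Measure TwoPt))
            = fun x : Ω => ut x * divE (fun y => p y z1 - p y z0) ↑x
              - divE (fun w => p w z1) ↑x := by
          funext x
          rw [hInt x (fun z => -divX p ↑x z)]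
          show ut x * (-divX p ↑x z0) + (1 - ut x) * (-divX p ↑x z1) = _
          rw [divX_eq, divX_eq,
            divE_sub (q₁ := fun y => p y z1) (q₂ := fun y => p y z0) (hcd z1) (hcd z0)]
          ring
        rw [show (∫ x : Ω, ∫ z, -divX p ↑x z ∂(u x : Measure TwoPt))
            = ∫ x : Ω, (ut x * divE (fun y => p y z1 - p y z0) ↑x
              - divE (fun w => p w z1) ↑x) from congrArg _ hstep1]
        rw [integral_sub
          (hIntmul _ (divE_cont hφc) ((divE_hcs hφcs).exists_bound_of_continuous (divE_cont hφc)))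
          (hIntc _ (divE_cont (hcd z1)) (hDbound z1))]
        rw [hdivΩ _ (hcd z1) (hpz z1) ((hpzt z1).trans hsupp), sub_zero]
    · rintro ⟨φ, hφc, hφcs, hφsupp, hφb, rfl⟩
      refine ⟨fun y z => ((z : ℝ) - 1) • φ y, ?_, ?_, ?_, ?_, ?_, ?_⟩
      · show Continuous fun a : EuclideanSpace ℝ (Fin d) × TwoPt => ((a.2 : ℝ) - 1) • φ a.1
        exact ((continuous_subtype_val.comp continuous_snd).sub continuous_const).smul
          (hφc.continuous.comp continuous_fst)
      · refine hφcs.mono fun y hy => ?_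
        simp only [Function.mem_support] at hy ⊢
        intro h0
        apply hy
        funext z
        show ((z : ℝ) - 1) • φ y = 0
        rw [h0, smul_zero]
      · refine (closure_minimal ?_ (isClosed_tsupport φ)).trans hφsupp
        refine Set.Subset.trans ?_ subset_closure
        intro y hy
        simp only [Function.mem_support] at hy ⊢
        intro h0
        apply hy
        funext z
        show ((z : ℝ) - 1) • φ y = 0
        rw [h0, smul_zero]
      · intro z
        exact hφc.const_smul _
      · intro y
        apply LipschitzWith.of_dist_le_mul
        intro a b
        rw [NNReal.coe_one, one_mul, dist_eq_norm]
        have e : ((a:ℝ)-1) • φ y - ((b:ℝ)-1) • φ y = ((a:ℝ)-(b:ℝ)) • φ y := by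
          rw [← sub_smul]; ring_nf
        rw [e, norm_smul, Real.norm_eq_abs, Subtype.dist_eq, Real.dist_eq]
        exact mul_le_of_le_one_right (abs_nonneg _) (hφb y)
      · refine (integral_congr_ae (Filter.Eventually.of_forall fun x => ?_))
        show ut x * (∑ i, fderiv ℝ (fun y => φ y i) (↑x) (EuclideanSpace.single i 1))
            = ∫ z, -divX (fun y (z : TwoPt) => ((z : ℝ) - 1) • φ y) ↑x z ∂(u x : Measure TwoPt)
        rw [hInt x (fun z => -divX (fun y (z : TwoPt) => ((z : ℝ) - 1) • φ y) ↑x z)]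
        show ut x * divE φ ↑x
            = ut x * (-divX (fun y (z : TwoPt) => ((z : ℝ) - 1) • φ y) ↑x z0)
            + (1 - ut x) * (-divX (fun y (z : TwoPt) => ((z : ℝ) - 1) • φ y) ↑x z1)
        rw [divX_eq, divX_eq]
        rw [show (fun w => (((z0 : TwoPt) : ℝ) - 1) • φ w) = fun w => (-1 : ℝ) • φ w by
              norm_num [z0],
          show (fun w => (((z1 : TwoPt) : ℝ) - 1) • φ w) = fun w => (0 : ℝ) • φ w by
              norm_num [z1]]
        rw [divE_const_smul hφc (-1), divE_const_smul hφc 0]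
        ring
  refine ⟨⟨hmeas, hbd⟩, hdec, hsurj, hW, hTV, ?_⟩
  intro lam hlam
  rw [hTV]
  congr 1
  exact integral_congr_ae (Filter.Eventually.of_forall fun x => hW x)
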